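/- Let B : V → Q* be a bounded linear operator between Hilbert spaces with closed range and C : Q → Q* the Riesz map. Then for any F ∈ V* vanishing on ker B, the problem ⟨B*p, v⟩ = ⟨F, v⟩ for all v ∈ V has a solution p in the closure of C⁻¹B(V), and this solution is unique in that subspace. -/

import Mathlib

open RealInnerProductSpace

/-- for a bounded operator `B : V → Q*` with closed range (encoded by
the closedness of the range of `C⁻¹B : V → Q`) and `F ∈ V*` vanishing on `ker B`,
the equation `⟨B*p, v⟩ = ⟨F, v⟩` for all `v` has a solution `p` in the closure of
`C⁻¹B(V)`, unique in that subspace. -/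
theorem stmt17
    {V W : Type*} [NormedAddCommGroup V] [InnerProductSpace ℝ V] [CompleteSpace V]
    [NormedAddCommGroup W] [InnerProductSpace ℝ W] [CompleteSpace W]
    (b : V →L[ℝ] W →L[ℝ] ℝ)
    (CB : V → W) (hCB : ∀ v : V, ∀ q : W, ⟪CB v, q⟫ = b v q)
    (hclosed : IsClosed (Set.range CB))
    (F : V →L[ℝ] ℝ)
    (hF : ∀ v : V, (∀ q : W, b v q = 0) → F v = 0) :
    ∃ p ∈ closure (Set.range CB), (∀ v : V, b v p = F v) ∧
      ∀ p' ∈ closure (Set.range CB), (∀ v : V, b v p' = F v) → p' = p := by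
  classical
  -- The Riesz representative map T : V →L W with ⟪T v, q⟫ = b v q
  let Tlin : V →ₗ[ℝ] W :=
    { toFun := fun v => (InnerProductSpace.toDual ℝ W).symm (b v)
      map_add' := by intro v v'; simp [map_add]
      map_smul' := by
        intro c v
        simp [map_smul] }
  set T : V →L[ℝ] W := Tlin.mkContinuous ‖b‖ (fun v => by
    show ‖(InnerProductSpace.toDual ℝ W).symm (b v)‖ ≤ ‖b‖ * ‖v‖
    rw [LinearIsometryEquiv.norm_map]
    exact b.le_opNorm v) with hT
  have hTapp : ∀ v : V, T v = (InnerProductSpace.toDual ℝ W).symm (b v) := fun v => rfl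
  have hTinner : ∀ v q, ⟪T v, q⟫ = b v q := by
    intro v q
    rw [hTapp, InnerProductSpace.toDual_symm_apply]
  have hCBT : CB = T := by
    funext v
    exact ext_inner_right ℝ (fun q => by rw [hCB v q, hTinner])
  set K : Submodule ℝ W := LinearMap.range (T : V →ₗ[ℝ] W) with hK
  have hrange : Set.range CB = (K : Set W) := by rw [hCBT]; rfl
  have hclosure : closure (Set.range CB) = (K : Set W) := by
    rw [hclosed.closure_eq, hrange]
  have hKclosed : IsClosed (K : Set W) := by rw [← hrange]; exact hclosed
  haveI : CompleteSpace K := hKclosed.completeSpace_coe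
  -- F vanishes on ker T
  have hFker : ∀ v : V, T v = 0 → F v = 0 := by
    intro v hv
    refine hF v fun q => ?_
    rw [← hTinner, hv, inner_zero_left]
  -- corestriction of T to K, surjective
  set T' : V →L[ℝ] K := T.codRestrict K (fun v => LinearMap.mem_range_self _ v) with hT'
  have hT'surj : Function.Surjective T' := by
    rintro ⟨w, v, hv⟩
    exact ⟨v, Subtype.ext hv⟩
  obtain ⟨C, Cpos, hC⟩ := T'.exists_preimage_norm_le hT'surj
  -- F is constant on fibers of T'
  have hfib : ∀ v v' : V, T' v = T' v' → F v = F v' := by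
    intro v v' h
    have h2 : T (v - v') = 0 := by
      have := congrArg (Subtype.val) h
      simp only [T', ContinuousLinearMap.coe_codRestrict_apply] at this
      simp [map_sub, this]
    have := hFker _ h2
    rw [map_sub] at this
    linarith
  choose sec hsec hsecnorm using hC
  have hsecF : ∀ (v : V), F (sec (T' v)) = F v := fun v => hfib _ _ (hsec _)
  let glin : K →ₗ[ℝ] ℝ :=
    { toFun := fun y => F (sec y)
      map_add' := by
        intro y y'
        show F (sec (y + y')) = F (sec y) + F (sec y')
        have h1 : F (sec (y + y')) = F (sec y + sec y') := by
          apply hfib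
          simp [map_add, hsec]
        rw [h1, map_add]
      map_smul' := by
        intro c y
        show F (sec (c • y)) = c • F (sec y)
        have h1 : F (sec (c • y)) = F (c • sec y) := by
          apply hfib
          simp [map_smul, hsec]
        rw [h1, map_smul] }
  have hgbound : ∀ y : K, ‖glin y‖ ≤ (‖F‖ * C) * ‖y‖ := by
    intro y
    calc ‖F (sec y)‖ ≤ ‖F‖ * ‖sec y‖ := F.le_opNorm _
    _ ≤ ‖F‖ * (C * ‖y‖) := mul_le_mul_of_nonneg_left (hsecnorm y) (norm_nonneg F)
    _ = (‖F‖ * C) * ‖y‖ := by ring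
  let g : K →L[ℝ] ℝ := glin.mkContinuous _ hgbound
  have hgapp : ∀ y : K, g y = F (sec y) := fun y => rfl
  -- Riesz representation of g on K
  set p₀ : K := (InnerProductSpace.toDual ℝ K).symm g with hp₀
  have hp₀rep : ∀ y : K, ⟪p₀, y⟫ = g y := fun y =>
    InnerProductSpace.toDual_symm_apply
  have hkey : ∀ v : V, ⟪T v, (p₀ : W)⟫ = F v := by
    intro v
    have h1 : ⟪T v, (p₀ : W)⟫ = ⟪T' v, p₀⟫ := rfl
    rw [h1, real_inner_comm, hp₀rep, hgapp, hsecF]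
  refine ⟨(p₀ : W), by rw [hclosure]; exact p₀.2, ?_, ?_⟩
  · intro v
    rw [← hTinner, hkey]
  · intro p' hp' hb
    rw [hclosure] at hp'
    have hmem : p' - (p₀ : W) ∈ K := K.sub_mem hp' p₀.2
    obtain ⟨v, hv⟩ := hmem
    change T v = p' - (p₀ : W) at hv
    have h0 : ⟪T v, p' - (p₀ : W)⟫ = 0 := by
      rw [inner_sub_right, hTinner, hb, hkey]
      ring
    rw [hv] at h0
    have := inner_self_eq_zero.mp h0
    rwa [sub_eq_zero] at this
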